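/- Let R be a commutative Noetherian ring, P a prime ideal of R, and N an R-module with Ass_R(N) = {P}. Suppose that for every f ∈ R \ P the natural localization map N → N_f is surjective. Then for every f ∈ R \ P the map N → N_f is bijective, and consequently the natural map N → N_P is an isomorphism. -/
import Mathlib


/-- Let `R` be Noetherian, `P` prime, and `N` an `R`-module with
`Ass_R N = {P}`.  If for every `f ∉ P` the localization map `N → N_f` is surjective, then
for every `f ∉ P` it is bijective, and the natural map `N → N_P` is an isomorphism. -/
theorem stmt9 (R : Type*) [CommRing R] [IsNoetherianRing R] (P : Ideal R) [P.IsPrime]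
    (N : Type*) [AddCommGroup N] [Module R N]
    (hAss : associatedPrimes R N = {P})
    (hsurj : ∀ f : R, f ∉ P →
      Function.Surjective (LocalizedModule.mkLinearMap (Submonoid.powers f) N)) :
    (∀ f : R, f ∉ P →
      Function.Bijective (LocalizedModule.mkLinearMap (Submonoid.powers f) N)) ∧
    Function.Bijective (LocalizedModule.mkLinearMap P.primeCompl N) := by
  -- every f ∉ P acts injectively on N
  have hreg : ∀ f : R, f ∉ P → ∀ n : N, f • n = 0 → n = 0 := by
    intro f hf n hn
    by_contra h
    have : f ∈ ⋃ p ∈ associatedPrimes R N, (p : Set R) := by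
      rw [biUnion_associatedPrimes_eq_zero_divisors]
      exact ⟨n, h, hn⟩
    rw [hAss] at this
    simp only [Set.mem_singleton_iff, Set.iUnion_iUnion_eq_left] at this
    exact hf this
  have hregpow : ∀ f : R, f ∉ P → ∀ (k : ℕ) (n : N), f ^ k • n = 0 → n = 0 := by
    intro f hf k
    induction k with
    | zero => intro n hn; simpa using hn
    | succ k ih =>
      intro n hn
      have hn' : f • (f ^ k • n) = 0 := by rw [← mul_smul, ← pow_succ']; exact hn
      exact ih n (hreg f hf _ hn')
  have hinj : ∀ f : R, f ∉ P →
      Function.Injective (LocalizedModule.mkLinearMap (Submonoid.powers f) N) := by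
    intro f hf n n' hnn
    simp only [LocalizedModule.mkLinearMap_apply] at hnn
    rw [LocalizedModule.mk_eq] at hnn
    obtain ⟨⟨u, k, rfl⟩, hu⟩ := hnn
    simp only [one_smul, Submonoid.smul_def] at hu
    have : f ^ k • (n - n') = 0 := by rw [smul_sub, hu, sub_self]
    exact sub_eq_zero.mp (hregpow f hf k _ this)
  refine ⟨fun f hf => ⟨hinj f hf, hsurj f hf⟩, ?_, ?_⟩
  · -- injective N → N_P
    intro n n' hnn
    simp only [LocalizedModule.mkLinearMap_apply] at hnn
    rw [LocalizedModule.mk_eq] at hnn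
    obtain ⟨⟨u, hu⟩, huu⟩ := hnn
    simp only [one_smul, Submonoid.smul_def] at huu
    have : u • (n - n') = 0 := by rw [smul_sub, huu, sub_self]
    exact sub_eq_zero.mp (hreg u hu _ this)
  · -- surjective N → N_P
    intro x
    induction x using LocalizedModule.induction_on with
    | h n s =>
      obtain ⟨m, hm⟩ := hsurj s.1 s.2 (LocalizedModule.mk n ⟨s.1, Submonoid.mem_powers _⟩)
      simp only [LocalizedModule.mkLinearMap_apply] at hm
      rw [LocalizedModule.mk_eq] at hm
      obtain ⟨⟨u, k, rfl⟩, hu⟩ := hm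
      refine ⟨m, ?_⟩
      simp only [LocalizedModule.mkLinearMap_apply]
      rw [LocalizedModule.mk_eq]
      refine ⟨⟨s.1 ^ k, pow_mem s.2 k⟩, ?_⟩
      exact hu
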